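/- Let f₁,…,f_s be homogeneous polynomials of degree δ in K[x₁,…,xₙ] and let G be the reduced grevlex Gröbner basis of I = ⟨f₁,…,f_s⟩. Fix j ∈ {1,…,n}. Then the reduced grevlex Gröbner basis of the ideal of K[x₁,…,x_j] generated by φ_j(f₁),…,φ_j(f_s) (obtained by setting x_{j+1} = ⋯ = xₙ = 0) is exactly { φ_j(g) : g ∈ G, LM(g) ∈ K[x₁,…,x_j] }. -/

import Mathlib

open MvPolynomial

/-- Total degree of an exponent vector. -/
def expDeg {n : ℕ} (m : Fin n →₀ ℕ) : ℕ := m.sum fun _ e => e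

/-- Graded reverse lexicographic strict order with `x₁ ≻ ⋯ ≻ xₙ`: `a ≺ b` iff
`deg a < deg b`, or the degrees agree and at the last index where they differ `a` has the
larger exponent. -/
def GrevlexLt {n : ℕ} (a b : Fin n →₀ ℕ) : Prop :=
  expDeg a < expDeg b ∨
    (expDeg a = expDeg b ∧ ∃ i : Fin n, b i < a i ∧ ∀ j : Fin n, i < j → a j = b j)

/-- `μ` is the leading monomial of `f` with respect to the strict order `lt`. -/
def IsLM {K : Type*} [Field K] {n : ℕ}
    (lt : (Fin n →₀ ℕ) → (Fin n →₀ ℕ) → Prop)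
    (f : MvPolynomial (Fin n) K) (μ : Fin n →₀ ℕ) : Prop :=
  μ ∈ f.support ∧ ∀ ν ∈ f.support, ν = μ ∨ lt ν μ

/-- The set of leading monomials of nonzero elements of an ideal. -/
def LMset {K : Type*} [Field K] {n : ℕ}
    (lt : (Fin n →₀ ℕ) → (Fin n →₀ ℕ) → Prop)
    (I : Ideal (MvPolynomial (Fin n) K)) : Set (Fin n →₀ ℕ) :=
  {μ | ∃ f ∈ I, IsLM lt f μ}

/-- The truncation `φ_j` setting the variables `x_{j+1},…,xₙ` to `0`, viewed as a map
into `K[x₁,…,x_j]`. -/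
noncomputable def truncMap (K : Type*) [Field K] {n : ℕ} (j : ℕ) (hj : j ≤ n) :
    MvPolynomial (Fin n) K →ₐ[K] MvPolynomial (Fin j) K :=
  MvPolynomial.aeval (fun k : Fin n =>
    if h : (k : ℕ) < j then MvPolynomial.X ⟨(k : ℕ), h⟩ else 0)

/-- `G` is the reduced Gröbner basis of `I` with respect to the monomial order `lt`. -/
def IsReducedGB {K : Type*} [Field K] {n : ℕ}
    (lt : (Fin n →₀ ℕ) → (Fin n →₀ ℕ) → Prop)
    (I : Ideal (MvPolynomial (Fin n) K)) (G : Set (MvPolynomial (Fin n) K)) : Prop :=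
  G.Finite ∧
  (∀ g ∈ G, g ≠ 0 ∧ g ∈ I) ∧
  (∀ f ∈ I, f ≠ 0 → ∃ g ∈ G, ∃ μ ν, IsLM lt g μ ∧ IsLM lt f ν ∧ μ ≤ ν) ∧
  (∀ g ∈ G, ∀ μ, IsLM lt g μ → g.coeff μ = 1) ∧
  (∀ g ∈ G, ∀ g' ∈ G, g ≠ g' → ∀ μ ν, IsLM lt g' μ → ν ∈ g.support → ¬ μ ≤ ν)

section Aux

lemma expDeg_degree {n : ℕ} (m : Fin n →₀ ℕ) : expDeg m = m.degree := rfl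

lemma isHomogeneous_def {K : Type*} [CommSemiring K] {n : ℕ} {p : MvPolynomial (Fin n) K} {m : ℕ} :
    p.IsHomogeneous m ↔ ∀ d, coeff d p ≠ 0 → expDeg d = m := by
  unfold MvPolynomial.IsHomogeneous MvPolynomial.IsWeightedHomogeneous
  simp_rw [expDeg_degree, Finsupp.degree_eq_weight_one]
  rfl

variable {n j : ℕ}

/-- largest index satisfying a predicate -/
lemma fin_exists_max {P : Fin n → Prop} [DecidablePred P] (h : ∃ i, P i) :
    ∃ i, P i ∧ ∀ k, i < k → ¬ P k := by
  classical
  set s := Finset.univ.filter (fun i : Fin n => P i) with hs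
  have hsne : s.Nonempty := by
    obtain ⟨i, hi⟩ := h
    exact ⟨i, by simp [hs, hi]⟩
  refine ⟨s.max' hsne, (Finset.mem_filter.mp (s.max'_mem hsne)).2, fun k hk hPk => ?_⟩
  exact absurd (Finset.le_max' s k (by simp [hs, hPk])) (not_le.mpr hk)

lemma grevlex_asymm {a b : Fin n →₀ ℕ} (h1 : GrevlexLt a b) (h2 : GrevlexLt b a) : False := by
  rcases h1 with h1 | ⟨e1, i1, hi1, ha1⟩
  · rcases h2 with h2 | ⟨e2, _⟩
    · omega
    · omega
  · rcases h2 with h2 | ⟨e2, i2, hi2, ha2⟩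
    · omega
    · rcases lt_trichotomy i1 i2 with h | h | h
      · exact absurd (ha1 i2 h) (by omega)
      · subst h; omega
      · exact absurd (ha2 i1 h) (by omega)

lemma grevlex_trans {a b c : Fin n →₀ ℕ} (h1 : GrevlexLt a b) (h2 : GrevlexLt b c) :
    GrevlexLt a c := by
  rcases h1 with h1 | ⟨e1, i1, hi1, ha1⟩
  · rcases h2 with h2 | ⟨e2, _⟩
    · exact Or.inl (h1.trans h2)
    · exact Or.inl (e2 ▸ h1)
  · rcases h2 with h2 | ⟨e2, i2, hi2, ha2⟩
    · exact Or.inl (e1 ▸ h2)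
    · refine Or.inr ⟨e1.trans e2, ?_⟩
      rcases lt_trichotomy i1 i2 with h | h | h
      · exact ⟨i2, by rw [ha1 i2 h]; exact hi2, fun k hk => (ha1 k (h.trans hk)).trans (ha2 k hk)⟩
      · subst h; exact ⟨i1, lt_trans hi2 hi1, fun k hk => (ha1 k hk).trans (ha2 k hk)⟩
      · exact ⟨i1, by rw [← ha2 i1 h]; exact hi1, fun k hk => (ha1 k hk).trans (ha2 k (h.trans hk))⟩

lemma grevlex_total {a b : Fin n →₀ ℕ} (h : a ≠ b) : GrevlexLt a b ∨ GrevlexLt b a := by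
  classical
  rcases lt_trichotomy (expDeg a) (expDeg b) with hd | hd | hd
  · exact Or.inl (Or.inl hd)
  · have hne : ∃ i, a i ≠ b i := by
      by_contra h'
      push_neg at h'
      exact h (Finsupp.ext h')
    obtain ⟨i, hi, hmax⟩ := fin_exists_max hne
    have heq : ∀ k, i < k → a k = b k := fun k hk => by
      by_contra hc; exact hmax k hk hc
    rcases lt_or_gt_of_ne hi with h' | h'
    · exact Or.inr (Or.inr ⟨hd.symm, i, h', fun k hk => (heq k hk).symm⟩)
    · exact Or.inl (Or.inr ⟨hd, i, h', heq⟩)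
  · exact Or.inr (Or.inl hd)

lemma exists_grevlex_max :
    ∀ s : Finset (Fin n →₀ ℕ), s.Nonempty → ∃ m ∈ s, ∀ x ∈ s, x = m ∨ GrevlexLt x m := by
  classical
  intro s
  induction s using Finset.induction_on with
  | empty => intro hs; simp at hs
  | @insert a t hat ih =>
    intro _
    rcases t.eq_empty_or_nonempty with rfl | ht
    · exact ⟨a, by simp, by simp⟩
    · obtain ⟨m, hm, hmax⟩ := ih ht
      by_cases hme : a = m
      · refine ⟨m, Finset.mem_insert_of_mem hm, fun x hx => ?_⟩
        rcases Finset.mem_insert.mp hx with rfl | hx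
        · exact Or.inl hme
        · exact hmax x hx
      rcases grevlex_total hme with h | h
      · refine ⟨m, Finset.mem_insert_of_mem hm, fun x hx => ?_⟩
        rcases Finset.mem_insert.mp hx with rfl | hx
        · exact Or.inr h
        · exact hmax x hx
      · refine ⟨a, Finset.mem_insert_self _ _, fun x hx => ?_⟩
        rcases Finset.mem_insert.mp hx with rfl | hx
        · exact Or.inl rfl
        · rcases hmax x hx with rfl | hx'
          · exact Or.inr h
          · exact Or.inr (grevlex_trans hx' h)

lemma exists_isLM {K : Type*} [Field K] {p : MvPolynomial (Fin n) K} (hp : p ≠ 0) :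
    ∃ μ, IsLM GrevlexLt p μ := by
  obtain ⟨m, hm, hmax⟩ := exists_grevlex_max p.support
    (by rwa [MvPolynomial.support_nonempty])
  exact ⟨m, hm, hmax⟩

lemma isLM_unique {K : Type*} [Field K] {p : MvPolynomial (Fin n) K} {μ μ' : Fin n →₀ ℕ}
    (h : IsLM GrevlexLt p μ) (h' : IsLM GrevlexLt p μ') : μ = μ' := by
  rcases h'.2 μ h.1 with h1 | h1
  · exact h1
  rcases h.2 μ' h'.1 with h2 | h2
  · exact h2.symm
  · exact absurd h1 (fun hc => grevlex_asymm hc h2)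

end Aux

section Emb

variable {n j : ℕ}

noncomputable def embF (hj : j ≤ n) (a : Fin j →₀ ℕ) : Fin n →₀ ℕ :=
  Finsupp.embDomain (Fin.castLEEmb hj) a

lemma embF_apply_castLE (hj : j ≤ n) (a : Fin j →₀ ℕ) (i : Fin j) :
    embF hj a (Fin.castLE hj i) = a i :=
  Finsupp.embDomain_apply_self _ _ _

lemma embF_apply_of_ge (hj : j ≤ n) (a : Fin j →₀ ℕ) {k : Fin n} (hk : j ≤ (k : ℕ)) :
    embF hj a k = 0 := by
  apply Finsupp.embDomain_notin_range
  rintro ⟨i, rfl⟩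
  simp only [Fin.castLEEmb_apply, Fin.coe_castLE] at hk
  omega

lemma embF_apply (hj : j ≤ n) (a : Fin j →₀ ℕ) (k : Fin n) :
    embF hj a k = if h : (k : ℕ) < j then a ⟨(k : ℕ), h⟩ else 0 := by
  split
  · rename_i h
    have h2 := embF_apply_castLE hj a ⟨(k : ℕ), h⟩
    rwa [show Fin.castLE hj ⟨(k : ℕ), h⟩ = k from Fin.ext (by simp)] at h2
  · exact embF_apply_of_ge hj a (by omega)

lemma embF_injective (hj : j ≤ n) : Function.Injective (embF hj) :=
  Finsupp.embDomain_injective _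

lemma expDeg_embF (hj : j ≤ n) (a : Fin j →₀ ℕ) : expDeg (embF hj a) = expDeg a := by
  unfold expDeg embF
  exact Finsupp.sum_embDomain

lemma embF_le_iff (hj : j ≤ n) {a b : Fin j →₀ ℕ} : embF hj a ≤ embF hj b ↔ a ≤ b := by
  rw [Finsupp.le_def, Finsupp.le_def]
  constructor
  · intro h i
    have := h (Fin.castLE hj i)
    rwa [embF_apply_castLE, embF_apply_castLE] at this
  · intro h k
    rw [embF_apply, embF_apply]
    split
    · exact h _
    · exact le_refl 0

lemma grevlexLt_embF_iff (hj : j ≤ n) {a b : Fin j →₀ ℕ} :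
    GrevlexLt (embF hj a) (embF hj b) ↔ GrevlexLt a b := by
  rw [GrevlexLt, GrevlexLt, expDeg_embF, expDeg_embF]
  constructor
  · rintro (h | ⟨he, i, hi, hab⟩)
    · exact Or.inl h
    · right
      refine ⟨he, ?_⟩
      have hij : (i : ℕ) < j := by
        by_contra hc
        rw [embF_apply_of_ge hj a (by omega), embF_apply_of_ge hj b (by omega)] at hi
        omega
      refine ⟨⟨(i : ℕ), hij⟩, ?_, ?_⟩
      · have hi' : i = Fin.castLE hj ⟨(i : ℕ), hij⟩ := Fin.ext (by simp)
        rwa [hi', embF_apply_castLE, embF_apply_castLE] at hi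
      · intro l hl
        have := hab (Fin.castLE hj l) (by rw [Fin.lt_def] at hl ⊢; simpa using hl)
        rwa [embF_apply_castLE, embF_apply_castLE] at this
  · rintro (h | ⟨he, i, hi, hab⟩)
    · exact Or.inl h
    · right
      refine ⟨he, Fin.castLE hj i, ?_, ?_⟩
      · rwa [embF_apply_castLE, embF_apply_castLE]
      · intro l hl
        rw [embF_apply, embF_apply]
        split
        · rename_i h'
          exact hab ⟨(l : ℕ), h'⟩ (by rw [Fin.lt_def] at hl ⊢; simpa using hl)
        · rfl

lemma exists_embF (hj : j ≤ n) (ν : Fin n →₀ ℕ) (hν : ∀ k : Fin n, j ≤ (k : ℕ) → ν k = 0) :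
    ∃ a, embF hj a = ν := by
  classical
  refine ⟨Finsupp.comapDomain (Fin.castLE hj) ν ((Fin.castLE_injective hj).injOn), ?_⟩
  ext k
  rw [embF_apply]
  split
  · rename_i h
    rw [Finsupp.comapDomain_apply]
    congr 1
  · exact (hν k (by omega)).symm

end Emb

section Trunc

variable {K : Type*} [Field K] {n j : ℕ}

lemma truncMap_monomial_emb (hj : j ≤ n) (a : Fin j →₀ ℕ) (c : K) :
    truncMap K j hj (monomial (embF hj a) c) = monomial a c := by
  rw [truncMap, aeval_monomial, embF, Finsupp.prod_embDomain]
  have heq : (a.prod fun i e =>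
      (if h : ((Fin.castLEEmb hj i : Fin n) : ℕ) < j then
        (X ⟨((Fin.castLEEmb hj i : Fin n) : ℕ), h⟩ : MvPolynomial (Fin j) K) else 0) ^ e)
      = a.prod fun i e => (X i : MvPolynomial (Fin j) K) ^ e := by
    apply Finsupp.prod_congr
    intro i _
    rw [dif_pos (by simp)]
    congr 1
  rw [heq, monomial_eq]
  rfl

lemma truncMap_monomial_unsupported (hj : j ≤ n) (ν : Fin n →₀ ℕ) (c : K)
    (h : ∃ k ∈ ν.support, j ≤ (k : ℕ)) :
    truncMap K j hj (monomial ν c) = 0 := by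
  rw [truncMap, aeval_monomial, Finsupp.prod]
  obtain ⟨k, hk, hkj⟩ := h
  rw [Finset.prod_eq_zero hk, mul_zero]
  rw [dif_neg (by omega)]
  exact zero_pow (Finsupp.mem_support_iff.mp hk)

lemma coeff_truncMap (hj : j ≤ n) (p : MvPolynomial (Fin n) K) (a : Fin j →₀ ℕ) :
    coeff a (truncMap K j hj p) = coeff (embF hj a) p := by
  induction p using MvPolynomial.induction_on' with
  | monomial ν c =>
    by_cases h : ∃ k ∈ ν.support, j ≤ (k : ℕ)
    · rw [truncMap_monomial_unsupported hj ν c h, coeff_zero]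
      symm
      rw [coeff_monomial, if_neg]
      obtain ⟨k, hk, hkj⟩ := h
      intro hc
      rw [hc] at hk
      exact Finsupp.mem_support_iff.mp hk (embF_apply_of_ge hj a hkj)
    · push_neg at h
      obtain ⟨b, rfl⟩ := exists_embF hj ν (fun k hk => by
        by_contra hc
        exact absurd (h k (Finsupp.mem_support_iff.mpr hc)) (by omega))
      rw [truncMap_monomial_emb, coeff_monomial, coeff_monomial]
      by_cases hba : b = a
      · rw [if_pos hba, if_pos (by rw [hba])]
      · rw [if_neg hba, if_neg (fun hc => hba (embF_injective hj hc))]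
  | add p q hp hq => rw [map_add, coeff_add, coeff_add, hp, hq]

lemma grevlexLt_of_unsupported (hj : j ≤ n) {a b : Fin n →₀ ℕ} (hd : expDeg a = expDeg b)
    (hb : ∀ k : Fin n, j ≤ (k : ℕ) → b k = 0) (ha : ∃ k : Fin n, j ≤ (k : ℕ) ∧ a k ≠ 0) :
    GrevlexLt a b := by
  classical
  obtain ⟨i, ⟨hij, hi0⟩, hmax⟩ := fin_exists_max (P := fun k => j ≤ (k : ℕ) ∧ a k ≠ 0) ha
  refine Or.inr ⟨hd, i, ?_, ?_⟩
  · rw [hb i hij]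
    omega
  · intro k hk
    have hkj : j ≤ (k : ℕ) := by
      rw [Fin.lt_def] at hk
      omega
    rw [hb k hkj]
    by_contra hc
    exact hmax k hk ⟨hkj, hc⟩

lemma isLM_truncMap (hj : j ≤ n) {g : MvPolynomial (Fin n) K} {μ : Fin n →₀ ℕ}
    (hLM : IsLM GrevlexLt g μ) (hsupp : ∀ k : Fin n, j ≤ (k : ℕ) → μ k = 0) :
    ∃ a, embF hj a = μ ∧ IsLM GrevlexLt (truncMap K j hj g) a := by
  obtain ⟨a, rfl⟩ := exists_embF hj μ hsupp
  refine ⟨a, rfl, ?_, ?_⟩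
  · rw [MvPolynomial.mem_support_iff, coeff_truncMap]
    exact MvPolynomial.mem_support_iff.mp hLM.1
  · intro b hb
    rw [MvPolynomial.mem_support_iff, coeff_truncMap] at hb
    rcases hLM.2 (embF hj b) (MvPolynomial.mem_support_iff.mpr hb) with h | h
    · exact Or.inl (embF_injective hj h)
    · exact Or.inr ((grevlexLt_embF_iff hj).mp h)

lemma hc_mul_homog {σ : Type*} {P : MvPolynomial σ K} {δ d : ℕ}
    (hP : P.IsHomogeneous δ) (hd : δ ≤ d) (q : MvPolynomial σ K) :
    homogeneousComponent d (q * P) = homogeneousComponent (d - δ) q * P := by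
  induction q using MvPolynomial.induction_on' with
  | monomial u c =>
    have h1 : (monomial u c * P) ∈ homogeneousSubmodule σ K (u.degree + δ) :=
      (isHomogeneous_monomial c rfl).mul hP
    have h2 : (monomial u c : MvPolynomial σ K) ∈ homogeneousSubmodule σ K u.degree :=
      isHomogeneous_monomial c rfl
    rw [homogeneousComponent_of_mem h1, homogeneousComponent_of_mem h2]
    by_cases h : u.degree = d - δ
    · rw [if_pos (by omega), if_pos (by omega)]
    · rw [if_neg (by omega), if_neg (by omega), zero_mul]
  | add p q hp hq => rw [add_mul, map_add, map_add, hp, hq, add_mul]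

lemma hc_mul_homog_lt {σ : Type*} {P : MvPolynomial σ K} {δ d : ℕ}
    (hP : P.IsHomogeneous δ) (hd : d < δ) (q : MvPolynomial σ K) :
    homogeneousComponent d (q * P) = 0 := by
  induction q using MvPolynomial.induction_on' with
  | monomial u c =>
    have h1 : (monomial u c * P) ∈ homogeneousSubmodule σ K (u.degree + δ) :=
      (isHomogeneous_monomial c rfl).mul hP
    rw [homogeneousComponent_of_mem h1, if_neg (by omega)]
  | add p q hp hq => rw [add_mul, map_add, hp, hq, add_zero]

end Trunc

/-- if `G` is the reduced grevlex Gröbner basis of `I = ⟨f₁,…,f_s⟩` with all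
`fᵢ` homogeneous of degree `δ`, then the reduced grevlex Gröbner basis of the ideal of
`K[x₁,…,x_j]` generated by `φ_j(f₁),…,φ_j(f_s)` is exactly
`{φ_j(g) : g ∈ G, LM(g) ∈ K[x₁,…,x_j]}`. -/
theorem stmt_8 {K : Type*} [Field K] {n s : ℕ}
    (f : Fin s → MvPolynomial (Fin n) K) (δ : ℕ)
    (hf : ∀ i, (f i).IsHomogeneous δ)
    (G : Set (MvPolynomial (Fin n) K))
    (hG : IsReducedGB (GrevlexLt (n := n)) (Ideal.span (Set.range f)) G)
    (j : ℕ) (hj1 : 1 ≤ j) (hj : j ≤ n) :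
    IsReducedGB (GrevlexLt (n := j))
      (Ideal.span (Set.range fun i => truncMap K j hj (f i)))
      ((truncMap K j hj) ''
        {g ∈ G | ∃ μ, IsLM (GrevlexLt (n := n)) g μ ∧
          ∀ k : Fin n, j ≤ (k : ℕ) → μ k = 0}) := by
  classical
  obtain ⟨hGfin, hGmem, hGdiv, hGmonic, hGred⟩ := hG
  have hcomp : ∀ q : MvPolynomial (Fin j) K,
      truncMap K j hj (rename (Fin.castLE hj) q) = q := by
    intro q
    have hc : (truncMap K j hj).comp (rename (Fin.castLE hj)) =
        AlgHom.id K (MvPolynomial (Fin j) K) := by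
      apply MvPolynomial.algHom_ext
      intro i
      simp only [AlgHom.comp_apply, rename_X, AlgHom.id_apply, truncMap, aeval_X]
      rw [dif_pos (by simpa using i.isLt)]
      congr 1
    exact DFunLike.congr_fun hc q
  have φfh : ∀ i : Fin s, (truncMap K j hj (f i)).IsHomogeneous δ := by
    intro i
    rw [isHomogeneous_def]
    intro d hd
    rw [coeff_truncMap] at hd
    have h2 := (isHomogeneous_def.mp (hf i)) _ hd
    rwa [expDeg_embF] at h2
  have hmapJ : ∀ p ∈ Ideal.span (Set.range f),
      truncMap K j hj p ∈ Ideal.span (Set.range fun i => truncMap K j hj (f i)) := by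
    intro p hp
    have he : Ideal.span (Set.range fun i => truncMap K j hj (f i)) =
        Ideal.map (truncMap K j hj) (Ideal.span (Set.range f)) := by
      rw [Ideal.map_span]
      congr 1
      exact Set.range_comp _ _
    rw [he]
    exact Ideal.mem_map_of_mem _ hp
  refine ⟨(hGfin.subset (Set.sep_subset _ _)).image _, ?_, ?_, ?_, ?_⟩
  · rintro g' ⟨g, ⟨hgG, μ, hLM, hμ⟩, rfl⟩
    obtain ⟨a, ha, hLM'⟩ := isLM_truncMap hj hLM hμ
    constructor
    · intro hzero
      have hmem := hLM'.1
      rw [hzero] at hmem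
      simp at hmem
    · exact hmapJ g (hGmem g hgG).2
  · -- division property
    intro h hhJ hh0
    obtain ⟨ν, hν⟩ := exists_isLM hh0
    set d := expDeg ν with hd
    obtain ⟨q, hq⟩ := Ideal.mem_span_range_iff_exists_fun.mp hhJ
    have hνd : ν.degree = d := by rw [← expDeg_degree]
    have hδd : δ ≤ d := by
      by_contra hc
      push_neg at hc
      have hzero : homogeneousComponent d h = 0 := by
        rw [← hq, map_sum]
        exact Finset.sum_eq_zero fun i _ => hc_mul_homog_lt (φfh i) hc (q i)
      have hcν : coeff ν h ≠ 0 := MvPolynomial.mem_support_iff.mp hν.1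
      have h2 := coeff_homogeneousComponent (σ := Fin j) (R := K) d h ν
      rw [hzero, coeff_zero, if_pos hνd] at h2
      exact hcν h2.symm
    set H : MvPolynomial (Fin n) K :=
      ∑ i, rename (Fin.castLE hj) (homogeneousComponent (d - δ) (q i)) * f i with hH
    have hHI : H ∈ Ideal.span (Set.range f) :=
      Ideal.sum_mem _ fun i _ => Ideal.mul_mem_left _ _ (Ideal.subset_span ⟨i, rfl⟩)
    have hφH : truncMap K j hj H = homogeneousComponent d h := by
      rw [hH, map_sum, ← hq, map_sum]
      refine Finset.sum_congr rfl fun i _ => ?_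
      rw [map_mul, hcomp, hc_mul_homog (φfh i) hδd]
    have hHhom : H.IsHomogeneous d := by
      rw [hH]
      refine MvPolynomial.IsHomogeneous.sum Finset.univ _ d fun i _ => ?_
      have h1 := (MvPolynomial.homogeneousComponent_isHomogeneous (d - δ)
        (q i)).rename_isHomogeneous (f := Fin.castLE hj)
      have h2 := h1.mul (hf i)
      rwa [Nat.sub_add_cancel hδd] at h2
    have hcoeffH : ∀ a : Fin j →₀ ℕ,
        coeff (embF hj a) H = coeff a (homogeneousComponent d h) := by
      intro a
      rw [← hφH, coeff_truncMap]
    have hmemν : embF hj ν ∈ H.support := by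
      rw [MvPolynomial.mem_support_iff, hcoeffH, coeff_homogeneousComponent, if_pos hνd]
      exact MvPolynomial.mem_support_iff.mp hν.1
    have hLMH : IsLM GrevlexLt H (embF hj ν) := by
      refine ⟨hmemν, fun κ hκ => ?_⟩
      have hκd : expDeg κ = d := isHomogeneous_def.mp hHhom κ (MvPolynomial.mem_support_iff.mp hκ)
      by_cases hsup : ∀ k : Fin n, j ≤ (k : ℕ) → κ k = 0
      · obtain ⟨b, rfl⟩ := exists_embF hj κ hsup
        have hb : coeff b h ≠ 0 := by
          have hmem := MvPolynomial.mem_support_iff.mp hκ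
          rw [hcoeffH, coeff_homogeneousComponent] at hmem
          by_cases hbd : b.degree = d
          · rwa [if_pos hbd] at hmem
          · rw [if_neg hbd] at hmem; exact absurd rfl hmem
        rcases hν.2 b (MvPolynomial.mem_support_iff.mpr hb) with rfl | hlt
        · exact Or.inl rfl
        · exact Or.inr ((grevlexLt_embF_iff hj).mpr hlt)
      · push_neg at hsup
        right
        refine grevlexLt_of_unsupported hj (by rw [hκd, expDeg_embF]) ?_ ?_
        · intro k hk; exact embF_apply_of_ge hj ν hk
        · obtain ⟨k, hk1, hk2⟩ := hsup; exact ⟨k, hk1, hk2⟩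
    have hH0 : H ≠ 0 := by
      intro hzero
      rw [hzero] at hmemν
      simp at hmemν
    obtain ⟨g, hgG, μg, νH, hLMg, hLMH', hle⟩ := hGdiv H hHI hH0
    have hνH : νH = embF hj ν := isLM_unique hLMH' hLMH
    subst hνH
    have hμgsupp : ∀ k : Fin n, j ≤ (k : ℕ) → μg k = 0 := by
      intro k hk
      have h2 := (Finsupp.le_def.mp hle) k
      rw [embF_apply_of_ge hj ν hk] at h2
      omega
    obtain ⟨a, ha, hLMa⟩ := isLM_truncMap hj hLMg hμgsupp
    refine ⟨truncMap K j hj g, ⟨g, ⟨hgG, μg, hLMg, hμgsupp⟩, rfl⟩, a, ν, hLMa, hν, ?_⟩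
    rw [← embF_le_iff hj (a := a) (b := ν), ha]
    exact hle
  · -- monic
    rintro g' ⟨g, ⟨hgG, μg, hLMg, hμg⟩, rfl⟩ μ hLMμ
    obtain ⟨a, ha, hLMa⟩ := isLM_truncMap hj hLMg hμg
    have hμ : μ = a := isLM_unique hLMμ hLMa
    subst hμ
    show coeff μ (truncMap K j hj g) = 1
    rw [coeff_truncMap, ha]
    exact hGmonic g hgG μg hLMg
  · -- reduced
    rintro g₁' ⟨g₁, ⟨hg₁G, μ₁, hLM₁, hμ₁⟩, rfl⟩ g₂' ⟨g₂, ⟨hg₂G, μ₂, hLM₂, hμ₂⟩, rfl⟩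
      hne μ ν hLMμ hν hle
    have hg12 : g₁ ≠ g₂ := fun hc => hne (by rw [hc])
    obtain ⟨a₂, ha₂, hLMa₂⟩ := isLM_truncMap hj hLM₂ hμ₂
    have hμa : μ = a₂ := isLM_unique hLMμ hLMa₂
    subst hμa
    have hνsupp : embF hj ν ∈ g₁.support := by
      rw [MvPolynomial.mem_support_iff]
      have h2 := MvPolynomial.mem_support_iff.mp hν
      rwa [coeff_truncMap] at h2
    exact hGred g₁ hg₁G g₂ hg₂G hg12 μ₂ (embF hj ν) hLM₂ hνsupp
      (ha₂ ▸ (embF_le_iff hj).mpr hle)
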